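/- Suppose G is a chordal graph with evaporation sequence L₁, …, L_t and exception set X (a clique), where t ≥ 2, and suppose X ∪ L_t is a clique. Suppose that at most one connected component C of G[L_{t−1}] satisfies N_G(v) ∩ (X ∪ L_t) = X ∪ L_t for the vertices v ∈ C. Then for every u ∈ L_t there exist a connected component C of G[L_{t−1}] and a vertex v ∈ C such that u is adjacent to v and N_G(v) ∩ (X ∪ L_t) is a proper subset of X ∪ L_t. -/
import Mathlib


/-- A graph is chordal if it contains no induced cycle of length at least 4. -/
def IsChordal {V : Type*} (G : SimpleGraph V) : Prop :=
  ∀ n : ℕ, 4 ≤ n → IsEmpty (SimpleGraph.cycleGraph n ↪g G)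

/-- The neighborhood of `v` inside the induced subgraph of `G` on the vertex set `R`. -/
def nbhdIn {V : Type*} (G : SimpleGraph V) (R : Set V) (v : V) : Set V :=
  {u | u ∈ R ∧ G.Adj u v}

/-- `v` is simplicial in the induced subgraph of `G` on `R`:
its neighborhood there is a clique. -/
def SimplicialIn {V : Type*} (G : SimpleGraph V) (R : Set V) (v : V) : Prop :=
  G.IsClique (nbhdIn G R v)

/-- The set of vertices remaining after `n` steps of the evaporation process of `G` with
exception set `X`: at each step all simplicial vertices of the current induced subgraph that
are not in `X` are removed. -/
def evapR {V : Type*} (G : SimpleGraph V) (X : Set V) : ℕ → Set V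
  | 0 => Set.univ
  | n + 1 =>
      evapR G X n \ {v | v ∈ evapR G X n ∧ v ∉ X ∧ SimplicialIn G (evapR G X n) v}

/-- The `i`-th set `L_i` of the evaporation sequence (for `i ≥ 1`): the vertices removed at
step `i` of the evaporation process. -/
def evapLayer {V : Type*} (G : SimpleGraph V) (X : Set V) (i : ℕ) : Set V :=
  evapR G X (i - 1) \ evapR G X i

/-- The evaporation time of `G` with exception set `X`: the length `t` of the evaporation
sequence, i.e. the least `t` with `evapR G X t = X`. -/
noncomputable def evapTime {V : Type*} (G : SimpleGraph V) (X : Set V) : ℕ :=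
  sInf {t | evapR G X t = X}

/-- The evaporation time of a vertex subset `S`: the largest index `i` such that
`L_i ∩ S ≠ ∅`. -/
noncomputable def evapTimeOf {V : Type*} (G : SimpleGraph V) (X S : Set V) : ℕ :=
  sSup {i | (evapLayer G X i ∩ S).Nonempty}

/-- `C` is a connected component of the induced subgraph of `G` on `S`:
a maximal subset of `S` inducing a connected subgraph. -/
def IsCompOf {V : Type*} (G : SimpleGraph V) (S C : Set V) : Prop :=
  C.Nonempty ∧ C ⊆ S ∧ (G.induce C).Connected ∧
    ∀ D, C ⊆ D → D ⊆ S → (G.induce D).Connected → D = C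

/-- The open neighborhood `N(S)` of a set of vertices. -/
def setNbhd {V : Type*} (G : SimpleGraph V) (S : Set V) : Set V :=
  {v | v ∉ S ∧ ∃ u ∈ S, G.Adj u v}

lemma X_subset_evapR {V : Type*} (G : SimpleGraph V) (X : Set V) :
    ∀ n, X ⊆ evapR G X n
  | 0 => by simp [evapR]
  | n + 1 => by
      intro v hv
      exact ⟨X_subset_evapR G X n hv, fun h => h.2.1 hv⟩

lemma comp_of_simplicial {V : Type*} (G : SimpleGraph V) (R S : Set V)
    (hSR : S ⊆ R)
    (hsimp : ∀ v ∈ S, G.IsClique (nbhdIn G R v))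
    (a : V) (ha : a ∈ S) :
    IsCompOf G S {w | w ∈ S ∧ (w = a ∨ G.Adj a w)} := by
  set C : Set V := {w | w ∈ S ∧ (w = a ∨ G.Adj a w)} with hC
  have haC : a ∈ C := ⟨ha, Or.inl rfl⟩
  -- closure under adjacency within S
  have hclosed : ∀ w ∈ C, ∀ z ∈ S, G.Adj w z → z ∈ C := by
    rintro w ⟨hwS, hwa⟩ z hzS hadj
    rcases hwa with rfl | hwa
    · exact ⟨hzS, Or.inr hadj⟩
    · by_cases hza : z = a
      · exact hza ▸ haC
      · refine ⟨hzS, Or.inr ?_⟩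
        have hclq := hsimp w hwS
        exact hclq (x := a) ⟨hSR ha, hwa⟩ (y := z) ⟨hSR hzS, hadj.symm⟩
          (fun h => hza h.symm)
  refine ⟨⟨a, haC⟩, fun w hw => hw.1, ?_, ?_⟩
  · have hne : Nonempty C := ⟨⟨a, haC⟩⟩
    refine ⟨fun w z => ?_⟩
    have key : ∀ x : C, (G.induce C).Reachable ⟨a, haC⟩ x := by
      rintro ⟨x, hxS, hxa⟩
      rcases hxa with rfl | hxa
      · rfl
      · exact (show (G.induce C).Adj ⟨x, ⟨hxS, Or.inr hxa⟩⟩ ⟨a, haC⟩ from hxa.symm).reachable.symm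
    exact (key w).symm.trans (key z)
  · intro D hCD hDS hconn
    refine Set.Subset.antisymm (fun d hd => ?_) hCD
    have haD : a ∈ D := hCD haC
    obtain ⟨p⟩ := hconn.preconnected ⟨a, haD⟩ ⟨d, hd⟩
    have walkC : ∀ (x y : D) (q : (G.induce D).Walk x y), ↑x ∈ C → ↑y ∈ C := by
      intro x y q
      induction q with
      | nil => exact id
      | cons h q ih =>
          intro hx
          exact ih (hclosed _ hx _ (hDS (Subtype.coe_prop _)) h)
    exact walkC _ _ p haC

/-- Suppose `G` is chordal with evaporation sequence `L₁, …, L_t` and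
exception set `X` (a clique), where `t ≥ 2`, and `X ∪ L_t` is a clique. If at most one
connected component `C` of `G[L_{t-1}]` satisfies `N_G(v) ∩ (X ∪ L_t) = X ∪ L_t` for the
vertices `v ∈ C`, then for every `u ∈ L_t` there exist a connected component `C` of
`G[L_{t-1}]` and a vertex `v ∈ C` adjacent to `u` with
`N_G(v) ∩ (X ∪ L_t) ⊊ X ∪ L_t`. -/
theorem set_cover_last_layer {V : Type*} [Fintype V] (G : SimpleGraph V) (X : Set V)
    (hch : IsChordal G) (hX : G.IsClique X)
    (t : ℕ) (htdef : evapTime G X = t) (ht : 2 ≤ t)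
    (hXL : G.IsClique (X ∪ evapLayer G X t))
    (huniq : ∀ C₁ C₂ : Set V,
      IsCompOf G (evapLayer G X (t - 1)) C₁ → IsCompOf G (evapLayer G X (t - 1)) C₂ →
      (∀ v ∈ C₁, X ∪ evapLayer G X t ⊆ G.neighborSet v) →
      (∀ v ∈ C₂, X ∪ evapLayer G X t ⊆ G.neighborSet v) → C₁ = C₂) :
    ∀ u ∈ evapLayer G X t, ∃ C : Set V, IsCompOf G (evapLayer G X (t - 1)) C ∧
      ∃ v ∈ C, G.Adj u v ∧
        G.neighborSet v ∩ (X ∪ evapLayer G X t) ⊂ X ∪ evapLayer G X t := by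
  intro u hu
  obtain ⟨n, rfl⟩ : ∃ n, t = n + 2 := ⟨t - 2, by omega⟩
  have e1 : n + 2 - 1 = n + 1 := rfl
  have e2 : n + 1 - 1 = n := rfl
  set L : Set V := evapLayer G X (n + 2) with hL
  set L1 : Set V := evapLayer G X (n + 2 - 1) with hL1
  have hRt : evapR G X (n + 2) = X := by
    have hne : {t' | evapR G X t' = X}.Nonempty := by
      by_contra h
      rw [Set.not_nonempty_iff_eq_empty] at h
      rw [evapTime, h, Nat.sInf_empty] at htdef
      omega
    have hmem := Nat.sInf_mem hne
    rwa [show sInf {t' | evapR G X t' = X} = n + 2 from htdef] at hmem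
  have hstep : ∀ m, evapR G X (m + 1)
      = evapR G X m \ {v | v ∈ evapR G X m ∧ v ∉ X ∧ SimplicialIn G (evapR G X m) v} :=
    fun m => rfl
  have hsub2 : evapR G X (n + 1) ⊆ evapR G X n := by
    rw [hstep n]; exact Set.diff_subset
  have hXsub : X ⊆ evapR G X (n + 1) := X_subset_evapR G X (n + 1)
  have hLdef : L = evapR G X (n + 1) \ X := by rw [hL, evapLayer, e1, hRt]
  have hL1def : L1 = evapR G X n \ evapR G X (n + 1) := by rw [hL1, evapLayer, e1, e2]
  have hRn1 : evapR G X (n + 1) = X ∪ L := by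
    rw [hLdef, Set.union_diff_cancel' (le_refl X) hXsub]
  -- every vertex of L1 is simplicial in evapR n and not in X
  have hsimpL1 : ∀ v ∈ L1, v ∉ X ∧ SimplicialIn G (evapR G X n) v := by
    intro v hv
    rw [hL1def] at hv
    obtain ⟨hvn, hvn1⟩ := hv
    rw [hstep n, Set.mem_diff, not_and, not_not] at hvn1
    exact ⟨(hvn1 hvn).2.1, (hvn1 hvn).2.2⟩
  have hdisjL1 : ∀ v ∈ L1, v ∉ X ∪ L := by
    intro v hv hmem
    rw [hL1def] at hv
    exact hv.2 (hRn1 ▸ hmem)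
  rw [hLdef] at hu
  obtain ⟨hu1, hu2⟩ := hu
  have huRn : u ∈ evapR G X n := hsub2 hu1
  have hunot : ¬ SimplicialIn G (evapR G X n) u := by
    intro hs
    have hu1' := hu1
    rw [hstep n] at hu1'
    exact hu1'.2 ⟨huRn, hu2, hs⟩
  rw [SimplicialIn, SimpleGraph.isClique_iff, Set.Pairwise] at hunot
  push_neg at hunot
  obtain ⟨a, ha, b, hb, hne, hnadj⟩ := hunot
  simp only [nbhdIn, Set.mem_setOf_eq] at ha hb
  obtain ⟨haR, hau⟩ := ha
  obtain ⟨hbR, hbu⟩ := hb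
  have hRdecomp : ∀ x ∈ evapR G X n, x ∈ X ∪ L ∨ x ∈ L1 := by
    intro x hx
    by_cases hx1 : x ∈ evapR G X (n + 1)
    · left; rwa [← hRn1]
    · right; rw [hL1def]; exact ⟨hx, hx1⟩
  have hproper : ∀ v : V, ¬ (X ∪ L ⊆ G.neighborSet v) →
      G.neighborSet v ∩ (X ∪ L) ⊂ X ∪ L := by
    intro v hv
    refine ⟨Set.inter_subset_right, fun hsup => hv ?_⟩
    exact fun x hx => (hsup hx).1
  have hcomp : ∀ a ∈ L1, IsCompOf G L1 {w | w ∈ L1 ∧ (w = a ∨ G.Adj a w)} := by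
    intro c hc
    refine comp_of_simplicial G (evapR G X n) L1 ?_ (fun v hv => (hsimpL1 v hv).2) c hc
    rw [hL1def]; exact Set.diff_subset
  by_cases hcase : ∃ v ∈ L1, G.Adj u v ∧ ¬ (X ∪ L ⊆ G.neighborSet v)
  · obtain ⟨v, hv, huv, hnfull⟩ := hcase
    exact ⟨_, hcomp v hv, v, ⟨hv, Or.inl rfl⟩, huv, hproper v hnfull⟩
  · push_neg at hcase
    exfalso
    have hfullprop : ∀ c ∈ L1, (X ∪ L ⊆ G.neighborSet c) →
        ∀ w ∈ {w | w ∈ L1 ∧ (w = c ∨ G.Adj c w)}, X ∪ L ⊆ G.neighborSet w := by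
      rintro c hc hfull w ⟨hwL1, hwc⟩
      rcases hwc with rfl | hwc
      · exact hfull
      · intro x hx
        have hsi := (hsimpL1 c hc).2
        have hxc : G.Adj x c := (hfull hx).symm
        have hxR : x ∈ evapR G X n := hsub2 (hRn1 ▸ hx)
        have hwR : w ∈ evapR G X n := (hL1def ▸ hwL1).1
        have hxw : x ≠ w := fun h => hdisjL1 w hwL1 (h ▸ hx)
        exact (hsi ⟨hxR, hxc⟩ ⟨hwR, hwc.symm⟩ hxw).symm
    have hfullnb : ∀ v ∈ L1, G.Adj v u → (X ∪ L ⊆ G.neighborSet v) :=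
      fun v hv h => hcase v hv h.symm
    rw [SimpleGraph.isClique_iff] at hXL
    rcases hRdecomp a haR with hma | hma <;> rcases hRdecomp b hbR with hmb | hmb
    · exact hnadj (hXL hma hmb hne)
    · exact hnadj ((hfullnb b hmb hbu) hma).symm
    · exact hnadj ((hfullnb a hma hau) hmb)
    · have hfa := hfullnb a hma hau
      have hfb := hfullnb b hmb hbu
      have heq := huniq _ _ (hcomp a hma) (hcomp b hmb)
        (hfullprop a hma hfa) (hfullprop b hmb hfb)
      have hbmem : b ∈ {w | w ∈ L1 ∧ (w = a ∨ G.Adj a w)} := by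
        rw [heq]; exact ⟨hmb, Or.inl rfl⟩
      rcases hbmem.2 with h | h
      · exact hne h.symm
      · exact hnadj h
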